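/- Let s be an n×n sign pattern with leader node 1 whose pattern digraph is a directed tree rooted at node 1: for every node j ≠ 1 there is exactly one walk from node 1 to j (say of length p_j ≥ 1, with walk sign σ_j equal to the product of the edge signs along it), and there is no walk of positive length from node 1 to itself. Suppose there exist nodes j ≠ k with equal depths p_j = p_k but opposite walk signs σ_j = −σ_k (a layer dilation). Then the pattern is not structurally sign herdable: for every realization A of s, every b ≠ 0, and every δ ∈ ℝⁿ, the vector 𝒞(A, b·e₁)δ is not entrywise strictly positive. -/

import Mathlib

/-- A walk of length `m` from node `i` to node `j` in the pattern digraph of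
the sign pattern `s`. -/
def isWalk (n : ℕ) (s : Matrix (Fin n) (Fin n) ℝ) (m : ℕ) (v : ℕ → Fin n)
    (i j : Fin n) : Prop :=
  v 0 = i ∧ v m = j ∧ ∀ t, t < m → s (v (t + 1)) (v t) ≠ 0

/-- The sign of a length-`m` walk `v`: the product of the edge signs along it. -/
def walkSign (n : ℕ) (s : Matrix (Fin n) (Fin n) ℝ) (m : ℕ) (v : ℕ → Fin n) : ℝ :=
  ∏ t ∈ Finset.range m, s (v (t + 1)) (v t)

/-- The controllability matrix `𝒞(A,B) = [B | AB | ⋯ | A^{n−1}B]`. -/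
def ctrbMatrix (n : ℕ) (A : Matrix (Fin n) (Fin n) ℝ) (B : Fin n → ℝ) :
    Matrix (Fin n) (Fin n) ℝ :=
  fun i k => (A ^ (k : ℕ)).mulVec B i

lemma rsign_mul (x y : ℝ) : Real.sign (x * y) = Real.sign x * Real.sign y := by
  rcases lt_trichotomy x 0 with hx | hx | hx <;>
    rcases lt_trichotomy y 0 with hy | hy | hy
  · rw [Real.sign_of_pos (mul_pos_of_neg_of_neg hx hy), Real.sign_of_neg hx,
      Real.sign_of_neg hy]; ring
  · simp [hy]
  · rw [Real.sign_of_neg (mul_neg_of_neg_of_pos hx hy), Real.sign_of_neg hx,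
      Real.sign_of_pos hy]; ring
  · simp [hx]
  · simp [hx]
  · simp [hx]
  · rw [Real.sign_of_neg (mul_neg_of_pos_of_neg hx hy), Real.sign_of_pos hx,
      Real.sign_of_neg hy]; ring
  · simp [hy]
  · rw [Real.sign_of_pos (mul_pos hx hy), Real.sign_of_pos hx, Real.sign_of_pos hy]; ring

lemma neg_of_rsign_eq_neg_one {x : ℝ} (h : Real.sign x = -1) : x < 0 := by
  rcases lt_trichotomy x 0 with hx | hx | hx
  · exact hx
  · simp [hx] at h
  · rw [Real.sign_of_pos hx] at h; norm_num at h


/-- **A directed tree with a layer dilation is not SS herdable (Prop. 3).**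
`s` is a sign pattern (entries in `{−1,0,+1}`) whose pattern digraph is a
directed tree rooted at the leader (node `1`, index `⟨0, hn⟩`): every node
`j ≠ 1` is reached by exactly one walk from the leader, of length `p j ≥ 1`
and sign `σ j`, and no walk of positive length returns to the leader.  If two
distinct nodes `j, k ≠ 1` satisfy `p j = p k` and `σ j = −σ k` (layer
dilation), then for every realization `A` of `s`, every `b ≠ 0`, and every
`δ`, the vector `𝒞(A, b·e₁) δ` is not entrywise strictly positive. -/
theorem tree_layer_dilation_not_SS_herdable
    (n : ℕ) (hn : 0 < n) (s : Matrix (Fin n) (Fin n) ℝ)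
    (hsgnpat : ∀ i j, s i j = -1 ∨ s i j = 0 ∨ s i j = 1)
    (p : Fin n → ℕ) (σ : Fin n → ℝ)
    (hp : ∀ j, j ≠ ⟨0, hn⟩ → 1 ≤ p j)
    (hσ : ∀ j, σ j = 1 ∨ σ j = -1)
    (hex : ∀ j, j ≠ ⟨0, hn⟩ → ∃ v : ℕ → Fin n, isWalk n s (p j) v ⟨0, hn⟩ j)
    (hall : ∀ j, j ≠ ⟨0, hn⟩ → ∀ (m : ℕ) (v : ℕ → Fin n),
      isWalk n s m v ⟨0, hn⟩ j → m = p j ∧ walkSign n s m v = σ j)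
    (huniq : ∀ j, j ≠ ⟨0, hn⟩ → ∀ (m m' : ℕ) (v v' : ℕ → Fin n),
      isWalk n s m v ⟨0, hn⟩ j → isWalk n s m' v' ⟨0, hn⟩ j →
      m = m' ∧ ∀ t, t ≤ m → v t = v' t)
    (hroot : ∀ m : ℕ, 0 < m →
      ¬ ∃ v : ℕ → Fin n, isWalk n s m v ⟨0, hn⟩ ⟨0, hn⟩)
    (j k : Fin n) (hj : j ≠ ⟨0, hn⟩) (hk : k ≠ ⟨0, hn⟩) (hjk : j ≠ k)
    (hdepth : p j = p k) (hdil : σ j = -σ k) :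
    ∀ A : Matrix (Fin n) (Fin n) ℝ, (∀ i l, Real.sign (A i l) = s i l) →
      ∀ b : ℝ, b ≠ 0 → ∀ δ : Fin n → ℝ,
        ¬ ∀ i, 0 <
          (ctrbMatrix n A (fun l => if l = ⟨0, hn⟩ then b else 0)).mulVec δ i := by
  intro A hsA b hb δ hpos
  set root : Fin n := ⟨0, hn⟩ with hroot_def
  set B : Fin n → ℝ := fun l => if l = root then b else 0 with hB
  -- the fundamental sign lemma
  have key : ∀ m : ℕ, ∀ i : Fin n, (A ^ m).mulVec B i ≠ 0 →
      ∃ v : ℕ → Fin n, isWalk n s m v root i ∧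
        Real.sign ((A ^ m).mulVec B i) = Real.sign b * walkSign n s m v := by
    intro m
    induction m with
    | zero =>
      intro i h
      have h0 : (A ^ 0).mulVec B i = B i := by simp [Matrix.one_mulVec]
      rw [h0] at h
      have hi : i = root := by
        by_contra hi
        simp [hB, hi] at h
      subst hi
      refine ⟨fun _ => root, ⟨rfl, rfl, fun t ht => absurd ht (Nat.not_lt_zero t)⟩, ?_⟩
      rw [h0]
      simp [hB, walkSign]
    | succ m ih =>
      intro i h
      have hrec : (A ^ (m + 1)).mulVec B i = ∑ l, A i l * (A ^ m).mulVec B l := by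
        rw [pow_succ', ← Matrix.mulVec_mulVec]
        simp [Matrix.mulVec, dotProduct]
      have hcontrib : ∀ l : Fin n, A i l * (A ^ m).mulVec B l ≠ 0 →
          ∃ w : ℕ → Fin n, isWalk n s (m + 1) w root i ∧ w m = l ∧
            Real.sign (A i l * (A ^ m).mulVec B l) =
              Real.sign b * walkSign n s (m + 1) w := by
        intro l hl
        have hAl : A i l ≠ 0 := left_ne_zero_of_mul hl
        have hfl : (A ^ m).mulVec B l ≠ 0 := right_ne_zero_of_mul hl
        obtain ⟨v, hv, hsv⟩ := ih l hfl
        have hsil : s i l ≠ 0 := by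
          rw [← hsA i l]
          simpa [Real.sign_eq_zero_iff] using hAl
        refine ⟨fun t => if t = m + 1 then i else v t, ⟨?_, ?_, ?_⟩, ?_, ?_⟩
        · simp [Nat.succ_ne_zero, hv.1]
        · simp
        · intro t ht
          rcases Nat.lt_or_ge t m with htm | htm
          · have h1 : t + 1 ≠ m + 1 := by omega
            have h2 : t ≠ m + 1 := by omega
            simpa [h1, h2, Nat.ne_of_lt htm] using hv.2.2 t htm
          · have htm' : t = m := by omega
            subst htm'
            have h2 : t ≠ t + 1 := by omega
            simpa [h2, hv.2.1] using hsil
        · simp [hv.2.1]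
        · have hws : walkSign n s (m + 1) (fun t => if t = m + 1 then i else v t)
              = walkSign n s m v * s i l := by
            unfold walkSign
            rw [Finset.prod_range_succ]
            congr 1
            · refine Finset.prod_congr rfl fun t ht => ?_
              have ht' := Finset.mem_range.mp ht
              have h1 : t + 1 ≠ m + 1 := by omega
              have h2 : t ≠ m + 1 := by omega
              simp [h1, h2, Nat.ne_of_lt ht']
            · have h2 : m ≠ m + 1 := by omega
              simp [h2, hv.2.1]
          rw [hws, rsign_mul, hsA i l, hsv]
          ring
      obtain ⟨l0, _, hl0⟩ := Finset.exists_ne_zero_of_sum_ne_zero (by rw [← hrec]; exact h)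
      obtain ⟨w, hw, hwm, hws⟩ := hcontrib l0 hl0
      have hi : i ≠ root := by
        intro hi
        exact hroot (m + 1) (Nat.succ_pos m) ⟨w, hi ▸ hw⟩
      have huniql : ∀ l : Fin n, A i l * (A ^ m).mulVec B l ≠ 0 → l = l0 := by
        intro l hl
        obtain ⟨w', hw', hwm', _⟩ := hcontrib l hl
        have := (huniq i hi (m + 1) (m + 1) w' w hw' hw).2 m (Nat.le_succ m)
        rw [hwm', hwm] at this
        exact this
      have hsingle : ∑ l, A i l * (A ^ m).mulVec B l = A i l0 * (A ^ m).mulVec B l0 := by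
        refine Finset.sum_eq_single l0 (fun l _ hne => ?_) (fun hmem => absurd (Finset.mem_univ l0) hmem)
        by_contra hz
        exact hne (huniql l hz)
      refine ⟨w, hw, ?_⟩
      rw [hrec, hsingle]
      exact hws
  -- vanishing away from depth
  have hzero : ∀ (q : Fin n), q ≠ root → ∀ m : ℕ, m ≠ p q → (A ^ m).mulVec B q = 0 := by
    intro q hq m hm
    by_contra hz
    obtain ⟨v, hv, _⟩ := key m q hz
    exact hm (hall q hq m v hv).1
  have hsum : ∀ i : Fin n, (ctrbMatrix n A B).mulVec δ i
      = ∑ κ : Fin n, (A ^ (κ : ℕ)).mulVec B i * δ κ := by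
    intro i
    simp [ctrbMatrix, Matrix.mulVec, dotProduct]
  by_cases hpn : p j < n
  · have hrow : ∀ q : Fin n, q ≠ root → p q = p j →
        (ctrbMatrix n A B).mulVec δ q = (A ^ (p j)).mulVec B q * δ ⟨p j, hpn⟩ := by
      intro q hq hpq
      rw [hsum q]
      refine Finset.sum_eq_single (⟨p j, hpn⟩ : Fin n) (fun κ _ hne => ?_)
        (fun hmem => absurd (Finset.mem_univ _) hmem)
      have hκ : (κ : ℕ) ≠ p q := by
        intro hc
        apply hne
        apply Fin.ext
        simp [hc, hpq]
      rw [hzero q hq (κ : ℕ) hκ, zero_mul]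
    have hxd := hpos j
    have hyd := hpos k
    rw [hrow j hj rfl] at hxd
    rw [hrow k hk hdepth.symm] at hyd
    set x := (A ^ (p j)).mulVec B j with hx
    set y := (A ^ (p j)).mulVec B k with hy
    set d := δ ⟨p j, hpn⟩ with hd
    have hxne : x ≠ 0 := left_ne_zero_of_mul (ne_of_gt hxd)
    have hyne : y ≠ 0 := left_ne_zero_of_mul (ne_of_gt hyd)
    obtain ⟨v, hv, hsx⟩ := key (p j) j hxne
    obtain ⟨v', hv', hsy⟩ := key (p j) k hyne
    have hσj : walkSign n s (p j) v = σ j := (hall j hj (p j) v hv).2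
    have hσk : walkSign n s (p j) v' = σ k := (hall k hk (p j) v' hv').2
    have hb2 : Real.sign b * Real.sign b = 1 := by
      rcases Real.sign_apply_eq_of_ne_zero b hb with h | h <;> rw [h] <;> norm_num
    have hσj2 : σ j * σ j = 1 := by
      rcases hσ j with h | h <;> rw [h] <;> norm_num
    have hsxy : Real.sign (x * y) = -1 := by
      rw [rsign_mul, hsx, hsy, hσj, hσk]
      have : σ k = -σ j := by rw [hdil]; ring
      rw [this]
      calc Real.sign b * σ j * (Real.sign b * -σ j)
          = -((Real.sign b * Real.sign b) * (σ j * σ j)) := by ring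
        _ = -1 := by rw [hb2, hσj2]; norm_num
    have hxyneg : x * y < 0 := neg_of_rsign_eq_neg_one hsxy
    nlinarith [mul_pos hxd hyd, sq_nonneg d]
  · have : (ctrbMatrix n A B).mulVec δ j = 0 := by
      rw [hsum j]
      refine Finset.sum_eq_zero fun κ _ => ?_
      have hκ : (κ : ℕ) ≠ p j := by
        have := κ.isLt; omega
      rw [hzero j hj (κ : ℕ) hκ, zero_mul]
    have h2 := hpos j
    rw [this] at h2
    exact lt_irrefl 0 h2
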